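/- Let q = 2^{2e+1} > 2 and σ: z ↦ z^{2^{e+1}}, and let V := {(η₁, η₂, η₃) ∈ F_q³ : η₃ = η₁η₂ + η₁^{σ+2} + η₂^{σ}} ∪ {∞}. For ξ ∈ F_q let t_{0,ξ} be the permutation of V fixing ∞ and mapping (η₁, η₂, η₃) to (η₁, η₂+ξ, η₃ + ξ^{σ} + ξη₁), and let w be the permutation of V interchanging ∞ and (0,0,0) and mapping (η₁, η₂, η₃) to (η₂/η₃, η₁/η₃, 1/η₃) for η₃ ≠ 0 (every point of V ∖ {∞, (0,0,0)} has η₃ ≠ 0). Then the subgroup of Sym(V) generated by {t_{0,ξ} : ξ ∈ F_q} ∪ {w} acts transitively on V. -/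

import Mathlib

/-- From the proof of Lemma 2.14: let q = 2^{2e+1} > 2, σ : z ↦ z^{2^{e+1}}, and V the
Suzuki ovoid (with ∞ represented by `none`). Let t_{0,ξ} (ξ ∈ F_q) fix ∞ and map
(η₁,η₂,η₃) to (η₁, η₂+ξ, η₃+ξ^σ+ξη₁), and let w interchange ∞ and (0,0,0) and map
(η₁,η₂,η₃) to (η₂/η₃, η₁/η₃, 1/η₃) when η₃ ≠ 0. Then the subgroup of Sym(V) generated by
the t_{0,ξ} and w acts transitively on V. -/
theorem stmt_7 {F : Type*} [Field F] [Fintype F] (e : ℕ) (he : 1 ≤ e)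
    (hcard : Fintype.card F = 2 ^ (2 * e + 1))
    (V : Set (Option (F × F × F)))
    (hV : V = insert none {v : Option (F × F × F) | ∃ a b c : F,
        v = some (a, b, c) ∧ c = a * b + a ^ (2 ^ (e + 1) + 2) + b ^ (2 ^ (e + 1))})
    (t : F → Equiv.Perm (Option (F × F × F)))
    (ht_inf : ∀ ξ : F, t ξ none = none)
    (ht : ∀ (ξ a b c : F), t ξ (some (a, b, c)) =
        some (a, b + ξ, c + ξ ^ (2 ^ (e + 1)) + ξ * a))
    (w : Equiv.Perm (Option (F × F × F)))
    (hw_inf : w none = some (0, 0, 0))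
    (hw_zero : w (some (0, 0, 0)) = none)
    (hw : ∀ a b c : F, c ≠ 0 → w (some (a, b, c)) = some (b / c, a / c, 1 / c)) :
    ∀ u ∈ V, ∀ v ∈ V,
      ∃ g ∈ Subgroup.closure ({w} ∪ Set.range t), g u = v := by
  set H := Subgroup.closure ({w} ∪ Set.range t) with hH
  have hwH : w ∈ H := Subgroup.subset_closure (Or.inl rfl)
  have htH : ∀ ξ, t ξ ∈ H := fun ξ => Subgroup.subset_closure (Or.inr ⟨ξ, rfl⟩)
  obtain ⟨k, hk⟩ : ∃ k, (2:ℕ)^(e+1) = k + 1 :=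
    ⟨2^(e+1) - 1, by have := Nat.one_le_two_pow (n := e+1); omega⟩
  -- key: every v ∈ V is reached from none
  have key : ∀ v ∈ V, ∃ g ∈ H, g none = v := by
    intro v hv
    rw [hV, Set.mem_insert_iff] at hv
    rcases hv with rfl | ⟨a, b, c, rfl, hc⟩
    · exact ⟨1, one_mem _, rfl⟩
    by_cases ha : a = 0
    · -- use t b ∘ w
      refine ⟨t b * w, mul_mem (htH b) hwH, ?_⟩
      have hc0 : c = b ^ (2^(e+1)) := by
        rw [hc, ha, zero_mul, zero_pow (by positivity), zero_add, zero_add]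
      simp only [Equiv.Perm.mul_apply, hw_inf, ht, ha, hc0]
      norm_num
    · -- a ≠ 0
      have hcop : (Nat.card Fˣ).Coprime k := by
        have hcardu : Nat.card Fˣ = 2 ^ (2*e+1) - 1 := by
          rw [Nat.card_units, Nat.card_eq_fintype_card, hcard]
        rw [hcardu]
        have h1 : Nat.gcd (2^(2*e+1)-1) k ∣ 2^(2*e+1)-1 := Nat.gcd_dvd_left _ _
        have h2 : Nat.gcd (2^(2*e+1)-1) k ∣ k := Nat.gcd_dvd_right _ _
        have hsq : (2:ℕ)^(2*e+2) = k*(k+2)+1 := by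
          have : (2:ℕ)^(2*e+2) = 2^(e+1) * 2^(e+1) := by
            rw [← pow_add]; congr 1; omega
          rw [this, hk]; ring
        have h3 : Nat.gcd (2^(2*e+1)-1) k ∣ 2^(2*e+2)-1 := by
          refine h2.trans ⟨k+2, ?_⟩
          omega
        have h4 : Nat.gcd (2^(2*e+1)-1) k ∣ 2^(2*e+1) := by
          have hd := Nat.dvd_sub h3 h1
          have hdouble : (2:ℕ)^(2*e+2) = 2 * 2^(2*e+1) := by
            rw [← pow_succ']
          have h1le : 1 ≤ (2:ℕ)^(2*e+1) := Nat.one_le_two_pow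
          have h5 : 2^(2*e+2) - 1 - (2^(2*e+1)-1) = 2^(2*e+1) := by omega
          rwa [h5] at hd
        have h6 := Nat.dvd_sub h4 h1
        have h1le : 1 ≤ (2:ℕ)^(2*e+1) := Nat.one_le_two_pow
        have h7 : 2^(2*e+1) - (2^(2*e+1)-1) = 1 := by omega
        rw [h7] at h6
        exact Nat.dvd_one.mp h6
      obtain ⟨u, hu⟩ := (powCoprime hcop).surjective (Units.mk0 a ha)⁻¹
      set ξ : F := (u : F) with hξ
      have hξ0 : ξ ≠ 0 := u.ne_zero
      rw [powCoprime_apply] at hu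
      have hξk : ξ ^ k = a⁻¹ := by
        simpa using congrArg Units.val hu
      have hq2 : ξ ^ ((2:ℕ)^(2*e+1)) = ξ := by rw [← hcard]; exact FiniteField.pow_card ξ
      -- ξ ^ (k*(k+2)) = ξ
      have hkk : ξ ^ (k*(k+2)) = ξ := by
        have h1 : ξ ^ (k*(k+2)+1) = ξ^2 := by
          have hsq : k*(k+2)+1 = 2^(2*e+1) * 2 := by
            have h2 : (2:ℕ)^(2*e+1) * 2 = 2^(e+1) * 2^(e+1) := by
              rw [← pow_succ, ← pow_add]; congr 1; omega
            rw [h2, hk]; ring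
          rw [hsq, pow_mul, hq2]
        have := h1
        rw [pow_succ, sq] at this
        exact mul_right_cancel₀ hξ0 this
      have hainv : a ^ (k+2) = ξ⁻¹ := by
        have h1 : (ξ ^ k) ^ (k+2) = ξ := by rw [← pow_mul]; exact hkk
        rw [hξk] at h1
        rw [← h1, ← inv_pow, inv_inv]
      have haσ : ξ ^ ((2:ℕ)^(e+1)) = a⁻¹ * ξ := by
        rw [hk, pow_succ, hξk]
      have hσ0 : a⁻¹ * ξ ≠ 0 := mul_ne_zero (inv_ne_zero ha) hξ0
      refine ⟨t b * w * t ξ * w, mul_mem (mul_mem (mul_mem (htH b) hwH) (htH ξ)) hwH, ?_⟩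
      simp only [Equiv.Perm.mul_apply, hw_inf]
      rw [ht ξ 0 0 0]
      rw [show (0:F) + ξ = ξ by ring, show (0:F) + ξ ^ (2^(e+1)) + ξ * 0 = ξ ^ (2^(e+1)) by ring]
      rw [haσ, hw 0 ξ (a⁻¹ * ξ) hσ0]
      have hfirst : ξ / (a⁻¹ * ξ) = a := by field_simp
      have hthird : 1 / (a⁻¹ * ξ) = a * ξ⁻¹ := by field_simp
      rw [hfirst, hthird, show (0:F)/(a⁻¹ * ξ) = 0 by simp, ht]
      have hcc : a * ξ⁻¹ + b ^ (2^(e+1)) + b * a = c := by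
        rw [hc, ← hainv, hk]
        ring
      rw [zero_add, hcc]
  -- conclude transitivity
  intro x hx y hy
  obtain ⟨g1, hg1, hg1x⟩ := key x hx
  obtain ⟨g2, hg2, hg2y⟩ := key y hy
  refine ⟨g2 * g1⁻¹, mul_mem hg2 (inv_mem hg1), ?_⟩
  rw [Equiv.Perm.mul_apply, ← hg1x, Equiv.Perm.inv_def, Equiv.symm_apply_apply, hg2y]
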